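/- Define f_n : T_n → ℤ(x) by f_1 ≡ 1 and f_n(β) = det(ψ_n(β) − I_{n−1}) / ((−x)^{n−1} U_{n−1}(1/x)) for n ≥ 2. Then f_n(1) = 0 and f_n(t_1 t_2 ⋯ t_{n−1}) = 1 for all n ≥ 2. -/

import Mathlib

open Matrix Polynomial

/-- Deformed Tits matrix `V_i` (generator index `i` is 1-based, `1 ≤ i ≤ m`):
the identity `m × m` matrix except column `i`, which has `-1` on the diagonal,
`y` in row `i-1` and `x` in row `i+1`. -/
def Vmat {R : Type*} [CommRing R] (x y : R) (m i : ℕ) : Matrix (Fin m) (Fin m) R :=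
  Matrix.of fun r c =>
    if (c : ℕ) + 1 = i then
      if (r : ℕ) + 1 = i then -1
      else if (r : ℕ) + 2 = i then y
      else if (r : ℕ) = i then x
      else 0
    else if r = c then 1 else 0

/-- Relators of the twin group with `m` generators (the twin group on `m+1` strands). -/
def twinRels (m : ℕ) : Set (FreeGroup (Fin m)) :=
  {r | (∃ i, r = FreeGroup.of i * FreeGroup.of i) ∨
       (∃ i j : Fin m, (i : ℕ) + 1 < (j : ℕ) ∧
          r = FreeGroup.of i * FreeGroup.of j * (FreeGroup.of i)⁻¹ * (FreeGroup.of j)⁻¹)}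

/-- The twin group `T_{m+1}` on `m+1` strands, with `m` generators `t_1, …, t_m`;
the generator `t_{i+1}` is `TwinGroup.of i` for `i : Fin m`. -/
def TwinGroup (m : ℕ) : Type := PresentedGroup (twinRels m)

instance (m : ℕ) : Group (TwinGroup m) :=
  inferInstanceAs (Group (PresentedGroup (twinRels m)))

/-- The generator `t_{i+1}` of the twin group. -/
def TwinGroup.of {m : ℕ} (i : Fin m) : TwinGroup m := PresentedGroup.of i

/-- The field `ℤ(x)` of rational functions over `ℤ`. -/
noncomputable abbrev Zx : Type := FractionRing (Polynomial ℤ)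

/-- The element `x` of `ℤ(x)`. -/
noncomputable def xx : Zx := algebraMap (Polynomial ℤ) Zx Polynomial.X

/-- `U_n(1/x)` as an element of `ℤ(x)`, `U_n` the `n`-th Chebyshev polynomial
of the second kind. -/
noncomputable def Ux (n : ℕ) : Zx := Polynomial.eval xx⁻¹ (Polynomial.Chebyshev.U Zx n)

section Aux

lemma xx_ne : xx ≠ 0 := by
  intro h
  exact Polynomial.X_ne_zero ((IsFractionRing.injective (Polynomial ℤ) Zx) (by simpa [xx] using h))

lemma sum_if_coe {m : ℕ} (t : ℕ) (g : Fin m → Zx) :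
    ∑ j : Fin m, (if (j : ℕ) = t then g j else 0) = if h : t < m then g ⟨t, h⟩ else 0 := by
  split
  · next h =>
    rw [Finset.sum_eq_single (⟨t, h⟩ : Fin m)]
    · simp
    · intro b _ hb
      rw [if_neg (by simpa [Fin.ext_iff] using hb)]
    · simp
  · next h =>
    apply Finset.sum_eq_zero
    intro j _
    rw [if_neg (by omega)]

/-- closed form for the entries of `V₁ ⋯ V_m` -/
noncomputable def Pfun (m : ℕ) (r c : Fin m) : Zx :=
  if (c : ℕ) + 1 = (r : ℕ) then xx
  else if (r : ℕ) = 0 then -xx ^ (c : ℕ)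
  else if (r : ℕ) ≤ (c : ℕ) then xx ^ ((c : ℕ) - (r : ℕ)) * (xx ^ 2 - 1)
  else 0

/-- partial product `V₁ ⋯ V_k` -/
noncomputable def Pk (m k : ℕ) : Matrix (Fin m) (Fin m) Zx :=
  Matrix.of fun r c => if (c : ℕ) < k then Pfun m r c else if r = c then 1 else 0

lemma Pk_zero (m : ℕ) : Pk m 0 = 1 := by
  ext r c
  simp [Pk, Matrix.one_apply]

end Aux

lemma hpow (a b : ℕ) (h : a + 1 = b) : xx * xx ^ a = xx ^ b := by
  subst h; rw [pow_succ]; ring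

set_option maxHeartbeats 2000000 in
lemma Pk_succ {m k : ℕ} (hk : k < m) :
    Pk m k * Vmat xx xx m (k + 1) = Pk m (k + 1) := by
  ext r c
  rw [Matrix.mul_apply]
  by_cases hc : (c : ℕ) = k
  · simp only [Vmat, Matrix.of_apply, if_pos (show (c : ℕ) + 1 = k + 1 by omega)]
    have key : ∀ j : Fin m, Pk m k r j *
        (if (j : ℕ) + 1 = k + 1 then (-1 : Zx) else if (j : ℕ) + 2 = k + 1 then xx
          else if (j : ℕ) = k + 1 then xx else 0) =
        (if (j : ℕ) = k then -(Pk m k r j) else 0) +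
        ((if (j : ℕ) = k - 1 ∧ 1 ≤ k then xx * Pk m k r j else 0) +
         (if (j : ℕ) = k + 1 then xx * Pk m k r j else 0)) := by
      intro j
      split_ifs <;> (first | ring1 | (exfalso; omega))
    rw [Finset.sum_congr rfl fun j _ => key j, Finset.sum_add_distrib,
      Finset.sum_add_distrib, sum_if_coe, sum_if_coe, dif_pos hk]
    have eId : ∀ (t : ℕ) (h : t < m), k ≤ t → Pk m k r ⟨t, h⟩ = if (r : ℕ) = t then 1 else 0 := by
      intro t h ht
      simp only [Pk, Matrix.of_apply, Fin.val_mk]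
      rw [if_neg (by omega)]
      simp [Fin.ext_iff]
    rw [eId k hk le_rfl]
    by_cases hk1 : 1 ≤ k
    · simp only [hk1, and_true]
      rw [sum_if_coe, dif_pos (show k - 1 < m by omega)]
      have eP : Pk m k r ⟨k - 1, by omega⟩ = Pfun m r ⟨k - 1, by omega⟩ := by
        simp only [Pk, Matrix.of_apply, Fin.val_mk]
        rw [if_pos (by omega)]
      rw [eP]
      by_cases hm1 : k + 1 < m
      · rw [dif_pos hm1, eId (k + 1) hm1 (by omega)]
        simp only [Pk, Pfun, Matrix.of_apply, Fin.val_mk, hc]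
        split_ifs <;>
          first
            | ring1
            | (exfalso; omega)
            | (rw [show k - (r : ℕ) = 0 from by omega, pow_zero]; ring1)
            | (rw [← hpow (k - 1) k (by omega)]; ring1)
            | (rw [← hpow (k - 1 - (r : ℕ)) (k - (r : ℕ)) (by omega)]; ring1)
      · rw [dif_neg hm1]
        simp only [Pk, Pfun, Matrix.of_apply, Fin.val_mk, hc]
        split_ifs <;>
          first
            | ring1
            | (exfalso; omega)
            | (rw [show k - (r : ℕ) = 0 from by omega, pow_zero]; ring1)
            | (rw [← hpow (k - 1) k (by omega)]; ring1)
            | (rw [← hpow (k - 1 - (r : ℕ)) (k - (r : ℕ)) (by omega)]; ring1)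
    · have hk0 : k = 0 := by omega
      subst hk0
      rw [Finset.sum_eq_zero (fun j _ => by rw [if_neg (by omega)])]
      by_cases hm1 : 0 + 1 < m
      · rw [dif_pos hm1, eId 1 hm1 (by omega)]
        simp only [Pk, Pfun, Matrix.of_apply, Fin.val_mk, hc]
        split_ifs <;> (first | ring1 | (exfalso; omega))
      · rw [dif_neg hm1]
        simp only [Pk, Pfun, Matrix.of_apply, Fin.val_mk, hc]
        split_ifs <;> (first | ring1 | (exfalso; omega))
  · simp only [Vmat, Matrix.of_apply, if_neg (show ¬((c : ℕ) + 1 = k + 1) by omega)]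
    simp only [mul_ite, mul_one, mul_zero]
    rw [Finset.sum_ite_eq' Finset.univ c (fun j => Pk m k r j)]
    simp only [Finset.mem_univ, if_true, Pk, Matrix.of_apply]
    exact if_congr (by omega) rfl rfl

lemma prod_V (m : ℕ) :
    (List.ofFn fun i : Fin m => Vmat xx xx m ((i : ℕ) + 1)).prod = Pk m m := by
  suffices h : ∀ k, k ≤ m →
      ((List.ofFn fun i : Fin m => Vmat xx xx m ((i : ℕ) + 1)).take k).prod = Pk m k by
    have := h m le_rfl
    rwa [List.take_of_length_le (by simp)] at this
  intro k hk
  induction k with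
  | zero => simp [Pk_zero]
  | succ n ih =>
    rw [List.prod_take_succ _ n (by simpa using hk), ih (by omega)]
    rw [List.getElem_ofFn]
    simpa using Pk_succ (show n < m by omega)

noncomputable def Emat (m : ℕ) : Matrix (Fin m) (Fin m) Zx :=
  Matrix.of fun r c =>
    if (r : ℕ) = (c : ℕ) then 1 else if (r : ℕ) + 1 = (c : ℕ) then -xx else 0

noncomputable def Trid (m : ℕ) : Matrix (Fin m) (Fin m) Zx :=
  Matrix.of fun r c =>
    if (r : ℕ) = (c : ℕ) then -2
    else if (r : ℕ) + 1 = (c : ℕ) ∨ (c : ℕ) + 1 = (r : ℕ) then xx else 0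

lemma det_Emat (m : ℕ) : (Emat m).det = 1 := by
  rw [Matrix.det_of_upperTriangular (by
    intro i j hji
    simp only [Emat, Matrix.of_apply, id] at *
    rw [if_neg (by omega), if_neg (by omega)])]
  simp [Emat]

set_option maxHeartbeats 2000000 in
lemma PE_eq_trid (m : ℕ) : (Pk m m - 1) * Emat m = Trid m := by
  ext r c
  rw [Matrix.mul_apply]
  have key : ∀ j : Fin m, (Pk m m - 1) r j * Emat m j c =
      (if (j : ℕ) = (c : ℕ) then (Pk m m - 1) r j else 0) +
      (if (j : ℕ) = (c : ℕ) - 1 ∧ 1 ≤ (c : ℕ) then -xx * (Pk m m - 1) r j else 0) := by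
    intro j
    simp only [Emat, Matrix.of_apply]
    split_ifs <;> (first | ring1 | (exfalso; omega))
  rw [Finset.sum_congr rfl fun j _ => key j, Finset.sum_add_distrib, sum_if_coe,
    dif_pos c.isLt]
  have ePf : ∀ (t : ℕ) (h : t < m), (Pk m m - 1) r ⟨t, h⟩ =
      Pfun m r ⟨t, h⟩ - if (r : ℕ) = t then 1 else 0 := by
    intro t h
    simp only [Matrix.sub_apply, Pk, Matrix.of_apply, Fin.val_mk, if_pos h,
      Matrix.one_apply, Fin.ext_iff]
  have hcc : (Pk m m - 1) r c = Pfun m r c - if (r : ℕ) = (c : ℕ) then 1 else 0 := by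
    have := ePf (c : ℕ) c.isLt
    simpa using this
  rw [hcc]
  by_cases hc1 : 1 ≤ (c : ℕ)
  · simp only [hc1, and_true]
    rw [sum_if_coe, dif_pos (show (c : ℕ) - 1 < m by omega), ePf]
    simp only [Pfun, Trid, Matrix.of_apply, Fin.val_mk]
    split_ifs <;>
      first
        | ring1
        | (exfalso; omega)
        | (rw [show (c : ℕ) - (r : ℕ) = 0 from by omega, pow_zero]; ring1)
        | (rw [← hpow ((c : ℕ) - 1) (c : ℕ) (by omega)]; ring1)
        | (rw [← hpow ((c : ℕ) - 1 - (r : ℕ)) ((c : ℕ) - (r : ℕ)) (by omega)]; ring1)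
        | (rw [show (c : ℕ) - 1 - (r : ℕ) = 0 from by omega, pow_zero,
            show (c : ℕ) - (r : ℕ) = 1 from by omega, pow_one]; ring1)
  · rw [Finset.sum_eq_zero (fun j _ => by rw [if_neg (by omega)])]
    simp only [Pfun, Trid, Matrix.of_apply]
    split_ifs <;>
      first
        | ring1
        | (exfalso; omega)
        | (rw [show (c : ℕ) = 0 from by omega, pow_zero]; ring1)
        | (rw [show (c : ℕ) - (r : ℕ) = 0 from by omega, pow_zero]; ring1)

lemma det_Pk_eq_trid (m : ℕ) : (Pk m m - 1).det = (Trid m).det := by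
  rw [← PE_eq_trid, Matrix.det_mul, det_Emat, mul_one]

lemma trid_shift (m : ℕ) : (Trid (m + 1)).submatrix Fin.succ Fin.succ = Trid m := by
  ext r c
  simp only [Trid, Matrix.submatrix_apply, Matrix.of_apply, Fin.val_succ]
  exact if_congr (by omega) rfl (if_congr (by omega) rfl rfl)

set_option maxHeartbeats 1000000 in
lemma det_trid_rec (m : ℕ) :
    (Trid (m + 2)).det = -2 * (Trid (m + 1)).det - xx ^ 2 * (Trid m).det := by
  rw [Matrix.det_succ_row_zero, Fin.sum_univ_succ, Fin.sum_univ_succ]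
  have h0 : Trid (m + 2) 0 0 = -2 := by simp [Trid]
  have h1 : Trid (m + 2) 0 (Fin.succ 0) = xx := by
    simp only [Trid, Matrix.of_apply, Fin.val_succ, Fin.val_zero]
    rw [if_neg (by omega), if_pos (Or.inl trivial)]
  have hrest : ∀ j : Fin m, Trid (m + 2) 0 (Fin.succ (Fin.succ j)) = 0 := by
    intro j
    simp only [Trid, Matrix.of_apply, Fin.val_succ, Fin.val_zero]
    simp
  rw [h0, h1, Finset.sum_eq_zero (fun j _ => by rw [hrest j]; ring)]
  have hsub0 : (Trid (m + 2)).submatrix Fin.succ (Fin.succAbove 0) = Trid (m + 1) := by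
    have h : (Fin.succAbove (0 : Fin (m + 2))) = Fin.succ := by
      funext i; exact Fin.zero_succAbove i
    rw [h, trid_shift]
  have hsub1 : ((Trid (m + 2)).submatrix Fin.succ (Fin.succAbove (Fin.succ 0))).det =
      xx * (Trid m).det := by
    rw [Fin.succ_zero_eq_one, Matrix.det_succ_column_zero, Fin.sum_univ_succ]
    have e0 : (Trid (m + 2)).submatrix Fin.succ (Fin.succAbove 1) 0 0 = xx := by
      simp only [Matrix.submatrix_apply, Fin.one_succAbove_zero, Trid, Matrix.of_apply,
        Fin.val_succ, Fin.val_zero]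
      rw [if_neg (by omega), if_pos (Or.inr trivial)]
    have erest : ∀ i : Fin m,
        (Trid (m + 2)).submatrix Fin.succ (Fin.succAbove 1) (Fin.succ i) 0 = 0 := by
      intro i
      simp only [Matrix.submatrix_apply, Fin.one_succAbove_zero, Trid, Matrix.of_apply,
        Fin.val_succ, Fin.val_zero]
      simp
    rw [e0, Finset.sum_eq_zero (fun i _ => by rw [erest i]; ring)]
    have esub : ((Trid (m + 2)).submatrix Fin.succ (Fin.succAbove 1)).submatrix
        (Fin.succAbove 0) Fin.succ = Trid m := by
      ext r c
      simp only [Matrix.submatrix_apply, Fin.zero_succAbove, Fin.one_succAbove_succ,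
        Trid, Matrix.of_apply, Fin.val_succ]
      exact if_congr (by omega) rfl (if_congr (by omega) rfl rfl)
    rw [esub]
    simp
  rw [hsub0, hsub1]
  simp only [Fin.val_zero, Fin.val_succ, pow_zero, pow_one]
  ring

lemma Ux_zero : Ux 0 = 1 := by
  simp [Ux, Polynomial.Chebyshev.U_zero]

lemma Ux_one : Ux 1 = 2 * xx⁻¹ := by
  simp [Ux, Polynomial.Chebyshev.U_one]

lemma Ux_rec (n : ℕ) : Ux (n + 2) = 2 * xx⁻¹ * Ux (n + 1) - Ux n := by
  unfold Ux
  rw [show ((n + 2 : ℕ) : ℤ) = (n : ℤ) + 2 by push_cast; ring,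
    show ((n + 1 : ℕ) : ℤ) = (n : ℤ) + 1 by push_cast; ring,
    Polynomial.Chebyshev.U_add_two]
  simp

lemma det_trid_eq (m : ℕ) : (Trid m).det = (-xx) ^ m * Ux m := by
  induction m using Nat.twoStepInduction with
  | zero => simp [Matrix.det_fin_zero, Ux_zero]
  | one =>
    rw [Matrix.det_fin_one]
    have h : Trid 1 0 0 = -2 := by simp [Trid]
    rw [h, Ux_one, pow_one]
    have hx : xx * xx⁻¹ = 1 := mul_inv_cancel₀ xx_ne
    linear_combination (2 : Zx) * hx
  | more n ih1 ih2 =>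
    rw [det_trid_rec, ih1, ih2, Ux_rec]
    have hx : xx * xx⁻¹ = 1 := mul_inv_cancel₀ xx_ne
    linear_combination (-2 * (-xx) ^ n * xx * Ux (n + 1)) * hx

noncomputable def TridP (m : ℕ) : Matrix (Fin m) (Fin m) (Polynomial ℤ) :=
  Matrix.of fun r c =>
    if (r : ℕ) = (c : ℕ) then -2
    else if (r : ℕ) + 1 = (c : ℕ) ∨ (c : ℕ) + 1 = (r : ℕ) then Polynomial.X else 0

set_option maxRecDepth 4000 in
lemma det_trid_ne (m : ℕ) : (Trid m).det ≠ 0 := by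
  have hmap : (algebraMap (Polynomial ℤ) Zx).mapMatrix (TridP m) = Trid m := by
    ext r c
    rw [RingHom.mapMatrix_apply, Matrix.map_apply]
    show (algebraMap (Polynomial ℤ) Zx) (TridP m r c) = Trid m r c
    unfold TridP Trid
    simp only [Matrix.of_apply]
    split_ifs
    · rw [map_neg, map_ofNat]
    · rfl
    · rw [map_zero]
  rw [← hmap, ← RingHom.map_det]
  intro h
  have hP : (TridP m).det = 0 :=
    IsFractionRing.injective (Polynomial ℤ) Zx (by rw [map_zero]; exact h)
  have h2 : (Polynomial.evalRingHom (0 : ℤ)) (TridP m).det = 0 := by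
    rw [hP, map_zero]
  rw [RingHom.map_det (Polynomial.evalRingHom 0) (TridP m)] at h2
  have h3 : (Polynomial.evalRingHom (0 : ℤ)).mapMatrix (TridP m) =
      Matrix.diagonal (fun _ => (-2 : ℤ)) := by
    ext r c
    rw [RingHom.mapMatrix_apply, Matrix.map_apply]
    show (Polynomial.evalRingHom (0 : ℤ)) (TridP m r c) = _
    unfold TridP
    simp only [Matrix.of_apply, Matrix.diagonal_apply,
      show (r = c) ↔ ((r : ℕ) = (c : ℕ)) from Fin.ext_iff]
    split_ifs
    · rw [map_neg, map_ofNat]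
    · rw [Polynomial.coe_evalRingHom, Polynomial.eval_X]
    · rw [map_zero]
  rw [h3, Matrix.det_diagonal] at h2
  simp at h2


/-- With `f_n(β) = det(ψ_n(β) − I_{n−1}) / ((−x)^{n−1} U_{n−1}(1/x))` (`n = m+1 ≥ 2`),
one has `f_n(1) = 0` and `f_n(t_1 t_2 ⋯ t_{n−1}) = 1`. -/
theorem stmt12 (m : ℕ) (hm : 1 ≤ m)
    (ψ : TwinGroup m →* Matrix (Fin m) (Fin m) Zx)
    (hψ : ∀ i : Fin m, ψ (TwinGroup.of i) = Vmat xx xx m ((i : ℕ) + 1)) :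
    Matrix.det (ψ 1 - 1) / ((-xx)^m * Ux m) = 0 ∧
    Matrix.det (ψ ((List.ofFn fun i : Fin m => TwinGroup.of i).prod) - 1)
        / ((-xx)^m * Ux m) = 1 := by
  have hprod : ψ ((List.ofFn fun i : Fin m => TwinGroup.of i).prod) = Pk m m := by
    rw [map_list_prod, ← prod_V m, List.map_ofFn]
    have hfun : (⇑ψ ∘ fun i : Fin m => TwinGroup.of i) =
        fun i : Fin m => Vmat xx xx m ((i : ℕ) + 1) := funext fun i => hψ i
    rw [hfun]
  have hdet : ((Pk m m : Matrix (Fin m) (Fin m) Zx) - 1).det = (-xx) ^ m * Ux m := by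
    rw [det_Pk_eq_trid, det_trid_eq]
  constructor
  · have : Nonempty (Fin m) := ⟨⟨0, hm⟩⟩
    rw [_root_.map_one, sub_self, Matrix.det_zero, zero_div]
  · rw [hprod, hdet, div_self (by rw [← det_trid_eq]; exact det_trid_ne m)]
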